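/- arXiv:2209.15245 — 2 statements merged into one kernel-verified Lean document; each statement's English description precedes it below -/
import Mathlib

section
/- Let B ≥ 2 and let w ∈ ℝ^B have nonnegative entries summing to 1 (a grouped label distribution). If some coordinate of w is zero (i.e., at least one class is missing from the grouped dataset), then Σ_{b=1}^B (w_b − 1/B)² > 1/B². -/
open Finset

/-- If a class is missing from the grouped label distribution, then QCID > 1/B². -/
theorem qcid_gt_of_missing_class (B : ℕ) (hB : 2 ≤ B) (w : Fin B → ℝ)
    (hw : ∀ b, 0 ≤ w b) (hsum : ∑ b, w b = 1)
    (b₀ : Fin B) (hb₀ : w b₀ = 0) :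
    ∑ b, (w b - 1 / B) ^ 2 > 1 / (B : ℝ) ^ 2 := by
  have hBpos : (0:ℝ) < B := by
    have : (0:ℕ) < B := by omega
    exact_mod_cast this
  have hsplit : ∑ b, (w b - 1 / B) ^ 2
      = (w b₀ - 1 / B) ^ 2 + ∑ b ∈ univ.erase b₀, (w b - 1 / B) ^ 2 :=
    (Finset.add_sum_erase _ _ (mem_univ b₀)).symm
  have hterm : (w b₀ - 1 / B) ^ 2 = 1 / (B:ℝ)^2 := by
    rw [hb₀]; field_simp; ring
  have hrest : 0 < ∑ b ∈ univ.erase b₀, (w b - 1 / B) ^ 2 := by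
    have hnn : (0:ℝ) ≤ ∑ b ∈ univ.erase b₀, (w b - 1 / B) ^ 2 :=
      Finset.sum_nonneg fun b _ => sq_nonneg _
    rcases hnn.lt_or_eq with h | h
    · exact h
    · exfalso
      have hall : ∀ b ∈ univ.erase b₀, (w b - 1 / B) ^ 2 = 0 := by
        intro b hb
        exact (Finset.sum_eq_zero_iff_of_nonneg fun b _ => sq_nonneg _).mp h.symm b hb
      have hval : ∀ b ∈ univ.erase b₀, w b = 1 / B := by
        intro b hb
        have := hall b hb
        have := pow_eq_zero_iff (n := 2) (by norm_num) |>.mp this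
        linarith
      have hsum' : ∑ b, w b = (B - 1 : ℝ) / B := by
        rw [← Finset.add_sum_erase _ _ (mem_univ b₀), hb₀,
          Finset.sum_congr rfl hval, Finset.sum_const, card_erase_of_mem (mem_univ b₀),
          Finset.card_univ, Fintype.card_fin]
        have : (1:ℕ) ≤ B := by omega
        rw [nsmul_eq_mul]
        push_cast [this]
        field_simp
        ring
      rw [hsum] at hsum'
      have : (B:ℝ) = B - 1 := by
        field_simp at hsum'
        linarith
      linarith
  rw [hsplit, hterm]
  linarith
end

section
/- (Class-Imbalance Reduction, part 2.) Let x_1, …, x_{N̄} be positive real numbers that are not all equal, and let β' > β > 0. Then (Σ_{i=1}^{N̄} x_i · x_i^{−β'}) / (Σ_{i=1}^{N̄} x_i^{−β'}) < (Σ_{i=1}^{N̄} x_i · x_i^{−β}) / (Σ_{i=1}^{N̄} x_i^{−β}); that is, increasing the exponent β strictly decreases the expected QCID under the distribution that selects subset i with probability proportional to x_i^{−β}. -/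
open Finset

private lemma term_pos {β β' : ℝ} (hβ : 0 < β) (hββ' : β < β')
    {y z : ℝ} (hy : 0 < y) (hz : 0 < z) (hne : y ≠ z) :
    0 < (y - z) * (y ^ (-β) * z ^ (-β') - z ^ (-β) * y ^ (-β')) := by
  have key : ∀ a b : ℝ, 0 < b → b < a →
      0 < (a - b) * (a ^ (-β) * b ^ (-β') - b ^ (-β) * a ^ (-β')) := by
    intro a b hb hba
    have ha : 0 < a := hb.trans hba
    have hδ : 0 < β' - β := by linarith
    have h2 : b ^ (β' - β) < a ^ (β' - β) := Real.rpow_lt_rpow hb.le hba hδ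
    have h3 : a ^ (-(β' - β)) < b ^ (-(β' - β)) := by
      rw [Real.rpow_neg ha.le, Real.rpow_neg hb.le]
      exact inv_strictAnti₀ (Real.rpow_pos_of_pos hb _) h2
    have ha' : a ^ (-β') = a ^ (-β) * a ^ (-(β' - β)) := by
      rw [← Real.rpow_add ha]; ring_nf
    have hb' : b ^ (-β') = b ^ (-β) * b ^ (-(β' - β)) := by
      rw [← Real.rpow_add hb]; ring_nf
    have h4 : b ^ (-β) * a ^ (-β') < a ^ (-β) * b ^ (-β') := by
      rw [ha', hb']
      have pa : 0 < a ^ (-β) := Real.rpow_pos_of_pos ha _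
      have pb : 0 < b ^ (-β) := Real.rpow_pos_of_pos hb _
      calc b ^ (-β) * (a ^ (-β) * a ^ (-(β' - β)))
          = a ^ (-β) * b ^ (-β) * a ^ (-(β' - β)) := by ring
        _ < a ^ (-β) * b ^ (-β) * b ^ (-(β' - β)) :=
            mul_lt_mul_of_pos_left h3 (mul_pos pa pb)
        _ = a ^ (-β) * (b ^ (-β) * b ^ (-(β' - β))) := by ring
    exact mul_pos (by linarith) (by linarith)
  rcases lt_or_gt_of_ne hne with h | h
  · nlinarith [key z y hy h]
  · exact key y z hz h

/-- Class-Imbalance Reduction (part 2): increasing the exponent β strictly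
decreases the expected QCID under the x_i^{−β}-weighted distribution. -/
theorem expected_qcid_strict_anti (n : ℕ) (x : Fin n → ℝ) (β β' : ℝ)
    (hx : ∀ i, 0 < x i) (hβ : 0 < β) (hββ' : β < β')
    (hne : ∃ i j, x i ≠ x j) :
    (∑ i, x i * x i ^ (-β')) / (∑ i, x i ^ (-β'))
      < (∑ i, x i * x i ^ (-β)) / (∑ i, x i ^ (-β)) := by
  obtain ⟨i₀, j₀, hij⟩ := hne
  have hSa : 0 < ∑ i, x i ^ (-β) :=
    sum_pos (fun i _ => Real.rpow_pos_of_pos (hx i) _) ⟨i₀, mem_univ _⟩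
  have hSb : 0 < ∑ i, x i ^ (-β') :=
    sum_pos (fun i _ => Real.rpow_pos_of_pos (hx i) _) ⟨i₀, mem_univ _⟩
  rw [div_lt_div_iff₀ hSb hSa]
  have key : 0 < ∑ i, ∑ j, (x i - x j) *
      (x i ^ (-β) * x j ^ (-β') - x j ^ (-β) * x i ^ (-β')) := by
    rw [← Finset.sum_product']
    apply Finset.sum_pos'
    · rintro ⟨i, j⟩ -
      rcases eq_or_ne (x i) (x j) with h | h
      · simp [h]
      · exact (term_pos hβ hββ' (hx i) (hx j) h).le
    · exact ⟨(i₀, j₀), mem_univ _, term_pos hβ hββ' (hx i₀) (hx j₀) hij⟩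
  have expand : ∑ i, ∑ j, (x i - x j) *
      (x i ^ (-β) * x j ^ (-β') - x j ^ (-β) * x i ^ (-β'))
      = 2 * ((∑ i, x i * x i ^ (-β)) * (∑ j, x j ^ (-β'))
        - (∑ i, x i * x i ^ (-β')) * (∑ j, x j ^ (-β))) := by
    have pe : ∀ i j : Fin n, (x i - x j) *
        (x i ^ (-β) * x j ^ (-β') - x j ^ (-β) * x i ^ (-β'))
        = (x i * x i ^ (-β)) * x j ^ (-β') - (x i * x i ^ (-β')) * x j ^ (-β)
          - x i ^ (-β) * (x j * x j ^ (-β')) + x i ^ (-β') * (x j * x j ^ (-β)) := by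
      intro i j; ring
    simp_rw [pe, Finset.sum_add_distrib, Finset.sum_sub_distrib,
      ← Finset.mul_sum, ← Finset.sum_mul]
    ring
  linarith [expand ▸ key]
end
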